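/- Fix p ∈ [0,1] and n ∈ ℕ. Let t : Ω → [0, +∞) be a function that depends only on the first n coordinates of its argument, and suppose that ∫ t(ω) dQ(ω) ≤ 1 for every Borel probability measure Q on Ω with Q ≼ B_p. Define the monotonization t̂(ω) = sup { t(ω') : ω' ∈ Ω, ω' ≤ ω }. Then ∫ t̂(ω) dB_p(ω) ≤ 1. -/

import Mathlib

open MeasureTheory
open scoped ENNReal

/-- `Q` can be coupled below `P`: there is a probability measure `R` on `Ω × Ω`
with first marginal `Q`, second marginal `P`, concentrated on pairs `(ω, ω')`
with `ω ≤ ω'` coordinatewise. -/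
def CoupledBelow (Q P : Measure (ℕ → Bool)) : Prop :=
  ∃ R : Measure ((ℕ → Bool) × (ℕ → Bool)), IsProbabilityMeasure R ∧
    R.map Prod.fst = Q ∧ R.map Prod.snd = P ∧
    R {q : (ℕ → Bool) × (ℕ → Bool) | q.1 ≤ q.2} = 1

/-- `B` is the Bernoulli measure with parameter `p` on Cantor space:
coordinates are independent and each equals `true` with probability `p`. -/
def IsBernoulli (p : ℝ) (B : Measure (ℕ → Bool)) : Prop :=
  IsProbabilityMeasure B ∧
  ∀ (s : Finset ℕ) (b : ℕ → Bool),
    B {ω : ℕ → Bool | ∀ i ∈ s, ω i = b i} =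
      ∏ i ∈ s, (if b i then ENNReal.ofReal p else ENNReal.ofReal (1 - p))

/-- Truncation to the first `n` coordinates. -/
def trunc (n : ℕ) (ω : ℕ → Bool) : Fin n → Bool := fun i => ω i

/-- Extension by `false`. -/
def emb (n : ℕ) (v : Fin n → Bool) : ℕ → Bool :=
  fun i => if h : i < n then v ⟨i, h⟩ else false

/-- "And" of `a` (on the first `n` coordinates) with `ω`, `false` afterwards. -/
def ee (n : ℕ) (a : Fin n → Bool) (ω : ℕ → Bool) : ℕ → Bool :=
  fun i => if h : i < n then (a ⟨i, h⟩ && ω i) else false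

/-- Selection of a maximizer of `a ↦ t (ee n a (emb n v))`. -/
noncomputable def Gsel (n : ℕ) (t : (ℕ → Bool) → ℝ≥0∞) (v : Fin n → Bool) :
    Fin n → Bool :=
  Classical.choose (Finite.exists_max fun a : Fin n → Bool => t (ee n a (emb n v)))

lemma Gsel_spec (n : ℕ) (t : (ℕ → Bool) → ℝ≥0∞) (v : Fin n → Bool)
    (a : Fin n → Bool) :
    t (ee n a (emb n v)) ≤ t (ee n (Gsel n t v) (emb n v)) :=
  Classical.choose_spec (Finite.exists_max fun a : Fin n → Bool => t (ee n a (emb n v))) a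

/-- The measurable selection map. -/
noncomputable def gmap (n : ℕ) (t : (ℕ → Bool) → ℝ≥0∞) (ω : ℕ → Bool) : ℕ → Bool :=
  ee n (Gsel n t (trunc n ω)) (emb n (trunc n ω))

lemma trunc_measurable (n : ℕ) : Measurable (trunc n) :=
  measurable_pi_lambda _ fun i => measurable_pi_apply _

lemma emb_trunc_apply (n : ℕ) (ω : ℕ → Bool) {i : ℕ} (hi : i < n) :
    emb n (trunc n ω) i = ω i := by
  simp [emb, trunc, hi]

lemma gmap_le (n : ℕ) (t : (ℕ → Bool) → ℝ≥0∞) (ω : ℕ → Bool) : gmap n t ω ≤ ω := by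
  intro i
  by_cases hi : i < n
  · simpa [gmap, ee, hi, emb_trunc_apply n ω hi] using Bool.and_le_right _ _
  · simp [gmap, ee, hi]

lemma gmap_measurable (n : ℕ) (t : (ℕ → Bool) → ℝ≥0∞) : Measurable (gmap n t) := by
  have : gmap n t = (fun v => ee n (Gsel n t v) (emb n v)) ∘ trunc n := rfl
  rw [this]
  exact (measurable_of_countable _).comp (trunc_measurable n)
/-- Monotonization lemma: if `t` depends only on the first `n` coordinates and
`∫ t dQ ≤ 1` for every probability measure `Q` coupled below the Bernoulli
measure `B_p`, then the monotonization `t̂(ω) = sup {t(ω') : ω' ≤ ω}` satisfies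
`∫ t̂ dB_p ≤ 1`. -/
theorem monotonization (p : ℝ) (hp0 : 0 ≤ p) (hp1 : p ≤ 1) (n : ℕ)
    (B : Measure (ℕ → Bool)) (hB : IsBernoulli p B)
    (t : (ℕ → Bool) → ℝ≥0∞) (htfin : ∀ ω, t ω ≠ ∞)
    (hdep : ∀ ω ω' : ℕ → Bool, (∀ i < n, ω i = ω' i) → t ω = t ω')
    (hint : ∀ Q : Measure (ℕ → Bool), IsProbabilityMeasure Q → CoupledBelow Q B →
      ∫⁻ ω, t ω ∂Q ≤ 1) :
    ∫⁻ ω, (⨆ (ω' : ℕ → Bool) (_ : ω' ≤ ω), t ω') ∂B ≤ 1 := by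
  classical
  have hBprob : IsProbabilityMeasure B := hB.1
  have hg : Measurable (gmap n t) := gmap_measurable n t
  -- `t` is measurable since it depends only on finitely many coordinates
  have ht : Measurable t := by
    have : t = (fun v => t (emb n v)) ∘ trunc n := by
      funext ω
      exact hdep ω (emb n (trunc n ω)) fun i hi => (emb_trunc_apply n ω hi).symm
    rw [this]
    exact (measurable_of_countable _).comp (trunc_measurable n)
  -- pointwise identity: the monotonization equals `t ∘ gmap`
  have hkey : ∀ ω : ℕ → Bool, (⨆ (ω' : ℕ → Bool) (_ : ω' ≤ ω), t ω') = t (gmap n t ω) := by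
    intro ω
    apply le_antisymm
    · refine iSup₂_le fun ω' hω' => ?_
      have h1 : t ω' = t (ee n (trunc n ω') (emb n (trunc n ω))) := by
        apply hdep
        intro i hi
        have hle : ω' i ≤ ω i := hω' i
        have hembω : emb n (trunc n ω) i = ω i := emb_trunc_apply n ω hi
        have hand : ((trunc n ω') ⟨i, hi⟩ && ω i) = ω' i := by
          simp only [trunc]
          revert hle
          cases ω' i <;> cases ω i <;> simp
        simp [ee, hi, hembω, hand]
      rw [h1]
      exact Gsel_spec n t (trunc n ω) _
    · exact le_iSup₂_of_le (gmap n t ω) (gmap_le n t ω) le_rfl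
  -- the pushforward measure
  set Q := B.map (gmap n t) with hQdef
  have hQprob : IsProbabilityMeasure Q := Measure.isProbabilityMeasure_map hg.aemeasurable
  have hpair : Measurable fun ω : ℕ → Bool => (gmap n t ω, ω) := hg.prodMk measurable_id
  have hsetmeas : MeasurableSet {q : (ℕ → Bool) × (ℕ → Bool) | q.1 ≤ q.2} := by
    have heq : {q : (ℕ → Bool) × (ℕ → Bool) | q.1 ≤ q.2} =
        ⋂ i, {q : (ℕ → Bool) × (ℕ → Bool) | q.1 i ≤ q.2 i} := by
      ext q; simp [Pi.le_def, Set.mem_iInter]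
    rw [heq]
    refine MeasurableSet.iInter fun i => ?_
    have h2 : {q : (ℕ → Bool) × (ℕ → Bool) | q.1 i ≤ q.2 i} =
        (fun q : (ℕ → Bool) × (ℕ → Bool) => (q.1 i, q.2 i)) ⁻¹'
          {p : Bool × Bool | p.1 ≤ p.2} := rfl
    rw [h2]
    exact (((measurable_pi_apply i).comp measurable_fst).prodMk
      ((measurable_pi_apply i).comp measurable_snd)) ((Set.toFinite _).measurableSet)
  have hcoupled : CoupledBelow Q B := by
    refine ⟨B.map (fun ω => (gmap n t ω, ω)), Measure.isProbabilityMeasure_map hpair.aemeasurable,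
      ?_, ?_, ?_⟩
    · rw [Measure.map_map measurable_fst hpair]; rfl
    · rw [Measure.map_map measurable_snd hpair]
      exact Measure.map_id
    · rw [Measure.map_apply hpair hsetmeas]
      have : (fun ω : ℕ → Bool => (gmap n t ω, ω)) ⁻¹'
          {q : (ℕ → Bool) × (ℕ → Bool) | q.1 ≤ q.2} = Set.univ := by
        ext ω; simpa using gmap_le n t ω
      rw [this]
      exact measure_univ
  calc ∫⁻ ω, (⨆ (ω' : ℕ → Bool) (_ : ω' ≤ ω), t ω') ∂B
      = ∫⁻ ω, t (gmap n t ω) ∂B := lintegral_congr hkey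
    _ = ∫⁻ ω, t ω ∂Q := (lintegral_map ht hg).symm
    _ ≤ 1 := hint Q hQprob hcoupled
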